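/- For every positive integer n with n ∉ {1, 2, 5}, the complete bipartite graph K_{n,n} admits no geodesic Leech labeling; that is, K_{n,n} is not a geodesic Leech graph for n ≠ 1, 2, 5. -/

import Mathlib

open SimpleGraph Finset

/-- A walk in `G` is a *geodesic walk* if it is a nontrivial path whose length equals
the distance in `G` between its endpoints. -/
def SimpleGraph.IsGeodesicWalk {V : Type*} (G : SimpleGraph V) {u v : V}
    (p : G.Walk u v) : Prop :=
  p.IsPath ∧ p.length = G.dist u v ∧ 0 < p.length

/-- The geodesic paths of `G`, where a path and its reverse are identified by
recording the (finite) set of edges of the path.  (A nontrivial path is determined,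
up to reversal, by its edge set.) -/
def SimpleGraph.geodesicPathSets {V : Type*} [DecidableEq V] (G : SimpleGraph V) :
    Set (Finset (Sym2 V)) :=
  {S | ∃ (u v : V) (p : G.Walk u v), G.IsGeodesicWalk p ∧ p.edges.toFinset = S}

/-- The geodesic path number `t_gp(G)`: the number of geodesic paths of `G`. -/
noncomputable def SimpleGraph.tgp {V : Type*} [DecidableEq V] (G : SimpleGraph V) : ℕ :=
  G.geodesicPathSets.ncard

/-- `f` is a geodesic Leech labeling of `G`: an edge labeling by positive integers such
that the weights of the geodesic paths of `G` are exactly `1, 2, …, t_gp(G)`,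
each occurring exactly once. -/
def SimpleGraph.IsGeodesicLeechLabeling {V : Type*} [DecidableEq V] (G : SimpleGraph V)
    (f : Sym2 V → ℕ) : Prop :=
  (∀ e ∈ G.edgeSet, 1 ≤ f e) ∧
    Set.BijOn (fun S => ∑ e ∈ S, f e) G.geodesicPathSets (Set.Icc 1 G.tgp)

namespace GeodAux
variable {n : ℕ}

abbrev GG (n : ℕ) : SimpleGraph (Fin n ⊕ Fin n) := completeBipartiteGraph (Fin n) (Fin n)

def E (a b : Fin n) : Sym2 (Fin n ⊕ Fin n) := s(Sum.inl a, Sum.inr b)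

lemma E_inj {a c b d : Fin n} : E a b = E c d ↔ a = c ∧ b = d := by
  simp [E, Sym2.eq_iff]

lemma adj_lr (a b : Fin n) : (GG n).Adj (Sum.inl a) (Sum.inr b) := by simp
lemma adj_rl (a b : Fin n) : (GG n).Adj (Sum.inr b) (Sum.inl a) := by simp

lemma dist_lr (a b : Fin n) : (GG n).dist (Sum.inl a) (Sum.inr b) = 1 :=
  SimpleGraph.dist_eq_one_iff_adj.2 (adj_lr a b)

lemma dist_rr (a : Fin n) {b b' : Fin n} (h : b ≠ b') :
    (GG n).dist (Sum.inr b) (Sum.inr b') = 2 := by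
  let w : (GG n).Walk (Sum.inr b) (Sum.inr b') :=
    Walk.cons (adj_rl a b) (Walk.cons (adj_lr a b') Walk.nil)
  have h2 : (GG n).dist (Sum.inr b) (Sum.inr b') ≤ 2 := by
    have := SimpleGraph.dist_le w
    simpa [w] using this
  have h0 : (GG n).dist (Sum.inr b) (Sum.inr b') ≠ 0 := by
    have := (SimpleGraph.Reachable.pos_dist_of_ne ⟨w⟩ (by simp [h]))
    omega
  have h1 : (GG n).dist (Sum.inr b) (Sum.inr b') ≠ 1 := by
    intro hc
    have := SimpleGraph.dist_eq_one_iff_adj.1 hc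
    simp at this
  omega

lemma dist_ll (b : Fin n) {a a' : Fin n} (h : a ≠ a') :
    (GG n).dist (Sum.inl a) (Sum.inl a') = 2 := by
  let w : (GG n).Walk (Sum.inl a) (Sum.inl a') :=
    Walk.cons (adj_lr a b) (Walk.cons (adj_rl a' b) Walk.nil)
  have h2 : (GG n).dist (Sum.inl a) (Sum.inl a') ≤ 2 := by
    have := SimpleGraph.dist_le w
    simpa [w] using this
  have h0 : (GG n).dist (Sum.inl a) (Sum.inl a') ≠ 0 := by
    have := (SimpleGraph.Reachable.pos_dist_of_ne ⟨w⟩ (by simp [h]))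
    omega
  have h1 : (GG n).dist (Sum.inl a) (Sum.inl a') ≠ 1 := by
    intro hc
    have := SimpleGraph.dist_eq_one_iff_adj.1 hc
    simp at this
  omega

lemma dist_le_two (u v : Fin n ⊕ Fin n) : (GG n).dist u v ≤ 2 := by
  rcases u with a | b <;> rcases v with a' | b'
  · by_cases h : a = a'
    · subst h; simp [SimpleGraph.dist_self]
    · have := SimpleGraph.dist_le
        (Walk.cons (adj_lr a a) (Walk.cons (adj_rl a' a) Walk.nil))
      simpa using this
  · have := SimpleGraph.dist_le (Walk.cons (adj_lr a b') Walk.nil)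
    simp at this; omega
  · have := SimpleGraph.dist_le (Walk.cons (adj_rl a' b) Walk.nil)
    simp at this; omega
  · by_cases h : b = b'
    · subst h; simp [SimpleGraph.dist_self]
    · have := SimpleGraph.dist_le
        (Walk.cons (adj_rl b b) (Walk.cons (adj_lr b b') Walk.nil))
      simpa using this


variable {n : ℕ}

/-- ordered pairs -/
def P (n : ℕ) : Finset (Fin n × Fin n) := univ.filter fun q => q.1 < q.2

def GS (n : ℕ) : Finset (Finset (Sym2 (Fin n ⊕ Fin n))) :=
  ((univ : Finset (Fin n × Fin n)).image fun q => {E q.1 q.2}) ∪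
  ((univ ×ˢ P n).image fun q => ({E q.1 q.2.1, E q.1 q.2.2} : Finset _)) ∪
  ((univ ×ˢ P n).image fun q => ({E q.2.1 q.1, E q.2.2 q.1} : Finset _))

lemma pair_eq_pair_iff {α : Type*} [DecidableEq α] {x y z w : α} :
    ({x, y} : Finset α) = {z, w} ↔ x = z ∧ y = w ∨ x = w ∧ y = z := by
  rw [← Finset.coe_inj]; push_cast; exact Set.pair_eq_pair_iff

lemma P_lt' {q : Fin n × Fin n} (h : q ∈ P n) : q.1 < q.2 := (Finset.mem_filter.1 h).2

lemma mem_P {q : Fin n × Fin n} (h : q.1 < q.2) : q ∈ P n :=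
  Finset.mem_filter.2 ⟨Finset.mem_univ _, h⟩

lemma mem_GS {S : Finset (Sym2 (Fin n ⊕ Fin n))} :
    S ∈ GS n ↔ (∃ a b, S = {E a b}) ∨
      (∃ a b b', b ≠ b' ∧ S = {E a b, E a b'}) ∨
      (∃ b a a', a ≠ a' ∧ S = {E a b, E a' b}) := by
  constructor
  · intro h
    rcases Finset.mem_union.1 h with h | h
    · rcases Finset.mem_union.1 h with h | h
      · obtain ⟨q, _, rfl⟩ := Finset.mem_image.1 h
        exact Or.inl ⟨q.1, q.2, rfl⟩
      · obtain ⟨q, hq, rfl⟩ := Finset.mem_image.1 h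
        have := P_lt' (Finset.mem_product.1 hq).2
        exact Or.inr (Or.inl ⟨q.1, q.2.1, q.2.2, ne_of_lt this, rfl⟩)
    · obtain ⟨q, hq, rfl⟩ := Finset.mem_image.1 h
      have := P_lt' (Finset.mem_product.1 hq).2
      exact Or.inr (Or.inr ⟨q.1, q.2.1, q.2.2, ne_of_lt this, rfl⟩)
  · rintro (⟨a, b, rfl⟩ | ⟨a, b, b', hne, rfl⟩ | ⟨b, a, a', hne, rfl⟩)
    · exact Finset.mem_union.2 (Or.inl (Finset.mem_union.2 (Or.inl
        (Finset.mem_image.2 ⟨(a, b), Finset.mem_univ _, rfl⟩))))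
    · rcases lt_or_gt_of_ne hne with h | h
      · exact Finset.mem_union.2 (Or.inl (Finset.mem_union.2 (Or.inr (Finset.mem_image.2
          ⟨(a, (b, b')), Finset.mem_product.2 ⟨Finset.mem_univ _, mem_P h⟩, rfl⟩))))
      · exact Finset.mem_union.2 (Or.inl (Finset.mem_union.2 (Or.inr (Finset.mem_image.2
          ⟨(a, (b', b)), Finset.mem_product.2 ⟨Finset.mem_univ _, mem_P h⟩,
            Finset.pair_comm _ _⟩))))
    · rcases lt_or_gt_of_ne hne with h | h
      · exact Finset.mem_union.2 (Or.inr (Finset.mem_image.2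
          ⟨(b, (a, a')), Finset.mem_product.2 ⟨Finset.mem_univ _, mem_P h⟩, rfl⟩))
      · exact Finset.mem_union.2 (Or.inr (Finset.mem_image.2
          ⟨(b, (a', a)), Finset.mem_product.2 ⟨Finset.mem_univ _, mem_P h⟩,
            Finset.pair_comm _ _⟩))

lemma card_P : 2 * (P n).card + n = n * n := by
  classical
  have h1 : (P n).card + (univ.filter fun q : Fin n × Fin n => ¬ q.1 < q.2).card
      = (univ : Finset (Fin n × Fin n)).card :=
    Finset.card_filter_add_card_filter_not _
  have h2 : (univ.filter fun q : Fin n × Fin n => ¬ q.1 < q.2)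
      = (univ.filter fun q : Fin n × Fin n => q.2 < q.1) ∪
        (univ.filter fun q : Fin n × Fin n => q.1 = q.2) := by
    rw [← Finset.filter_or]
    apply Finset.filter_congr
    intro q _
    constructor
    · intro h; rcases lt_trichotomy q.1 q.2 with h' | h' | h'
      · exact absurd h' h
      · exact Or.inr h'
      · exact Or.inl h'
    · rintro (h | h) <;> omega
  have hdisj : Disjoint (univ.filter fun q : Fin n × Fin n => q.2 < q.1)
      (univ.filter fun q : Fin n × Fin n => q.1 = q.2) := by
    rw [Finset.disjoint_filter]
    intro q _ h h'
    omega
  have h3 : (univ.filter fun q : Fin n × Fin n => q.2 < q.1).card = (P n).card := by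
    apply Finset.card_nbij' (i := fun q => (q.2, q.1)) (j := fun q => (q.2, q.1)) <;>
      simp [P, Finset.subset_iff, Set.MapsTo, Set.LeftInvOn, Set.RightInvOn]
  have h4 : (univ.filter fun q : Fin n × Fin n => q.1 = q.2).card = n := by
    rw [show (univ.filter fun q : Fin n × Fin n => q.1 = q.2)
        = univ.image (fun b : Fin n => (b, b)) by
      ext q
      simp only [Finset.mem_filter, Finset.mem_univ, true_and, Finset.mem_image]
      constructor
      · intro hq; exact ⟨q.1, by simp [Prod.ext_iff, hq]⟩
      · rintro ⟨b, rfl⟩; rfl]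
    rw [Finset.card_image_of_injective _ (fun x y h => (Prod.ext_iff.1 h).1)]
    simp
  have h5 : (univ : Finset (Fin n × Fin n)).card = n * n := by simp
  rw [h2, Finset.card_union_of_disjoint hdisj, h3, h4, h5] at h1
  omega


lemma E_ne_left {a : Fin n} {b b' : Fin n} (h : b ≠ b') : E a b ≠ E a b' := by
  simp [E_inj, h]

lemma E_ne_right {a a' b : Fin n} (h : a ≠ a') : E a b ≠ E a' b := by
  simp [E_inj, h]

lemma inj1 : Set.InjOn (fun q : Fin n × Fin n => ({E q.1 q.2} : Finset (Sym2 (Fin n ⊕ Fin n))))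
    (univ : Finset (Fin n × Fin n)) := by
  intro q _ r _ h
  simp only [Finset.singleton_inj, E_inj] at h
  exact Prod.ext h.1 h.2

lemma inj2 : Set.InjOn
    (fun q : Fin n × Fin n × Fin n => ({E q.1 q.2.1, E q.1 q.2.2} : Finset (Sym2 (Fin n ⊕ Fin n))))
    ((univ ×ˢ P n) : Finset (Fin n × Fin n × Fin n)) := by
  intro q hq r hr h
  simp only [Finset.mem_coe, Finset.mem_product] at hq hr
  have hq2 := P_lt' hq.2; have hr2 := P_lt' hr.2
  simp only [pair_eq_pair_iff, E_inj] at h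
  rcases h with ⟨⟨h1, h2⟩, h3, h4⟩ | ⟨⟨h1, h2⟩, h3, h4⟩
  · exact Prod.ext h1 (Prod.ext h2 h4)
  · exfalso; rw [h2] at hq2; rw [← h4] at hr2; exact absurd h2 (by omega)

lemma inj3 : Set.InjOn
    (fun q : Fin n × Fin n × Fin n => ({E q.2.1 q.1, E q.2.2 q.1} : Finset (Sym2 (Fin n ⊕ Fin n))))
    ((univ ×ˢ P n) : Finset (Fin n × Fin n × Fin n)) := by
  intro q hq r hr h
  simp only [Finset.mem_coe, Finset.mem_product] at hq hr
  have hq2 := P_lt' hq.2; have hr2 := P_lt' hr.2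
  simp only [pair_eq_pair_iff, E_inj] at h
  rcases h with ⟨⟨h1, h2⟩, h3, h4⟩ | ⟨⟨h1, h2⟩, h3, h4⟩
  · exact Prod.ext h2 (Prod.ext h1 h3)
  · exfalso; rw [h1] at hq2; rw [← h3] at hr2; exact absurd h1 (by omega)

lemma disj12 : Disjoint ((univ : Finset (Fin n × Fin n)).image
      fun q => ({E q.1 q.2} : Finset (Sym2 (Fin n ⊕ Fin n))))
    ((univ ×ˢ P n).image fun q => ({E q.1 q.2.1, E q.1 q.2.2} : Finset (Sym2 (Fin n ⊕ Fin n)))) := by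
  rw [Finset.disjoint_left]
  rintro S hS hS'
  obtain ⟨q, _, rfl⟩ := Finset.mem_image.1 hS
  obtain ⟨r, hr, h⟩ := Finset.mem_image.1 hS'
  have hlt := P_lt' (Finset.mem_product.1 hr).2
  have c1 : ({E r.1 r.2.1, E r.1 r.2.2} : Finset (Sym2 (Fin n ⊕ Fin n))).card = 2 :=
    Finset.card_pair (E_ne_left (ne_of_lt hlt))
  rw [h] at c1; simp at c1

lemma disj12' : Disjoint ((univ : Finset (Fin n × Fin n)).image
      fun q => ({E q.1 q.2} : Finset (Sym2 (Fin n ⊕ Fin n))))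
    ((univ ×ˢ P n).image fun q => ({E q.2.1 q.1, E q.2.2 q.1} : Finset (Sym2 (Fin n ⊕ Fin n)))) := by
  rw [Finset.disjoint_left]
  rintro S hS hS'
  obtain ⟨q, _, rfl⟩ := Finset.mem_image.1 hS
  obtain ⟨r, hr, h⟩ := Finset.mem_image.1 hS'
  have hlt := P_lt' (Finset.mem_product.1 hr).2
  have c1 : ({E r.2.1 r.1, E r.2.2 r.1} : Finset (Sym2 (Fin n ⊕ Fin n))).card = 2 :=
    Finset.card_pair (E_ne_right (ne_of_lt hlt))
  rw [h] at c1; simp at c1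

lemma disj23 : Disjoint
    ((univ ×ˢ P n).image fun q => ({E q.1 q.2.1, E q.1 q.2.2} : Finset (Sym2 (Fin n ⊕ Fin n))))
    ((univ ×ˢ P n).image fun q => ({E q.2.1 q.1, E q.2.2 q.1} : Finset (Sym2 (Fin n ⊕ Fin n)))) := by
  rw [Finset.disjoint_left]
  rintro S hS hS'
  obtain ⟨q, hq, rfl⟩ := Finset.mem_image.1 hS
  obtain ⟨r, hr, h⟩ := Finset.mem_image.1 hS'
  have hq2 := P_lt' (Finset.mem_product.1 hq).2
  have hr2 := P_lt' (Finset.mem_product.1 hr).2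
  rw [pair_eq_pair_iff] at h
  simp only [E_inj] at h
  rcases h with ⟨⟨h1, h2⟩, h3, h4⟩ | ⟨⟨h1, h2⟩, h3, h4⟩ <;> omega

lemma card_GS : (GS n).card = n ^ 3 := by
  have c1 : ((univ : Finset (Fin n × Fin n)).image
      (fun q => ({E q.1 q.2} : Finset (Sym2 (Fin n ⊕ Fin n))))).card = n * n := by
    rw [Finset.card_image_of_injOn inj1]; simp
  have c2 : (((univ ×ˢ P n) : Finset (Fin n × Fin n × Fin n)).image
      (fun q => ({E q.1 q.2.1, E q.1 q.2.2} : Finset (Sym2 (Fin n ⊕ Fin n))))).card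
      = n * (P n).card := by
    rw [Finset.card_image_of_injOn inj2]; simp
  have c3 : (((univ ×ˢ P n) : Finset (Fin n × Fin n × Fin n)).image
      (fun q => ({E q.2.1 q.1, E q.2.2 q.1} : Finset (Sym2 (Fin n ⊕ Fin n))))).card
      = n * (P n).card := by
    rw [Finset.card_image_of_injOn inj3]; simp
  have hd : Disjoint (((univ : Finset (Fin n × Fin n)).image
      fun q => ({E q.1 q.2} : Finset (Sym2 (Fin n ⊕ Fin n)))) ∪
      ((univ ×ˢ P n).image fun q => ({E q.1 q.2.1, E q.1 q.2.2} : Finset (Sym2 (Fin n ⊕ Fin n)))))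
      ((univ ×ˢ P n).image fun q => ({E q.2.1 q.1, E q.2.2 q.1} : Finset (Sym2 (Fin n ⊕ Fin n)))) :=
    Finset.disjoint_union_left.2 ⟨disj12', disj23⟩
  rw [GS, Finset.card_union_of_disjoint hd, Finset.card_union_of_disjoint disj12, c1, c2, c3]
  have h2 : n * (2 * (P n).card + n) = n * (n * n) := by rw [card_P]
  ring_nf at h2 ⊢
  linarith [h2]

lemma filter_not_lt : (univ.filter fun q : Fin n × Fin n => ¬ q.1 < q.2)
    = (univ.filter fun q : Fin n × Fin n => q.2 < q.1) ∪
      (univ.filter fun q : Fin n × Fin n => q.1 = q.2) := by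
  rw [← Finset.filter_or]
  apply Finset.filter_congr
  intro q _
  constructor
  · intro h; rcases lt_trichotomy q.1 q.2 with h' | h' | h'
    · exact absurd h' h
    · exact Or.inr h'
    · exact Or.inl h'
  · rintro (h | h) <;> omega

lemma disj_gt_eq : Disjoint (univ.filter fun q : Fin n × Fin n => q.2 < q.1)
    (univ.filter fun q : Fin n × Fin n => q.1 = q.2) := by
  rw [Finset.disjoint_filter]
  intro q _ h h'
  omega

lemma diag_eq : (univ.filter fun q : Fin n × Fin n => q.1 = q.2)
    = univ.image (fun b : Fin n => (b, b)) := by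
  ext q
  simp only [Finset.mem_filter, Finset.mem_univ, true_and, Finset.mem_image]
  constructor
  · intro hq; exact ⟨q.1, by simp [Prod.ext_iff, hq]⟩
  · rintro ⟨b, rfl⟩; rfl
lemma pair_sum (g : Fin n → ℕ) :
    (∑ q ∈ P n, (g q.1 + g q.2)) + ∑ b, g b = n * ∑ b, g b := by
  classical
  have hswap : ∑ q ∈ P n, g q.2
      = ∑ q ∈ univ.filter (fun q : Fin n × Fin n => q.2 < q.1), g q.1 := by
    apply Finset.sum_nbij' (i := fun q => (q.2, q.1)) (j := fun q => (q.2, q.1)) <;>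
      simp [P]
  have hall : ∑ q : Fin n × Fin n, g q.1 = n * ∑ b, g b := by
    rw [Fintype.sum_prod_type]
    simp [Finset.sum_const]
    rw [Finset.mul_sum]
  have hsplit : (∑ q ∈ P n, g q.1) + ∑ q ∈ univ.filter (fun q : Fin n × Fin n => ¬ q.1 < q.2), g q.1
      = ∑ q : Fin n × Fin n, g q.1 := by
    rw [P]; exact Finset.sum_filter_add_sum_filter_not _ _ _
  have hdiag : ∑ q ∈ univ.filter (fun q : Fin n × Fin n => q.1 = q.2), g q.1 = ∑ b, g b := by
    rw [diag_eq, Finset.sum_image (by intro x _ y _ h; exact (Prod.ext_iff.1 h).1)]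
  rw [Finset.sum_add_distrib, hswap]
  rw [filter_not_lt, Finset.sum_union disj_gt_eq, hdiag] at hsplit
  omega

lemma sum_GS (f : Sym2 (Fin n ⊕ Fin n) → ℕ) :
    (∑ S ∈ GS n, ∑ e ∈ S, f e) + ∑ q : Fin n × Fin n, f (E q.1 q.2)
      = 2 * n * ∑ q : Fin n × Fin n, f (E q.1 q.2) := by
  classical
  have hd : Disjoint (((univ : Finset (Fin n × Fin n)).image
      fun q => ({E q.1 q.2} : Finset (Sym2 (Fin n ⊕ Fin n)))) ∪
      ((univ ×ˢ P n).image fun q => ({E q.1 q.2.1, E q.1 q.2.2} : Finset (Sym2 (Fin n ⊕ Fin n)))))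
      ((univ ×ˢ P n).image fun q => ({E q.2.1 q.1, E q.2.2 q.1} : Finset (Sym2 (Fin n ⊕ Fin n)))) :=
    Finset.disjoint_union_left.2 ⟨disj12', disj23⟩
  set T := ∑ q : Fin n × Fin n, f (E q.1 q.2) with hT
  have s1 : ∑ S ∈ ((univ : Finset (Fin n × Fin n)).image
      fun q => ({E q.1 q.2} : Finset (Sym2 (Fin n ⊕ Fin n)))), ∑ e ∈ S, f e = T := by
    rw [Finset.sum_image (fun x hx y hy h => inj1 (Finset.mem_coe.2 hx) (Finset.mem_coe.2 hy) h)]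
    simp [hT]
  have s2 : (∑ S ∈ ((univ ×ˢ P n).image
        fun q => ({E q.1 q.2.1, E q.1 q.2.2} : Finset (Sym2 (Fin n ⊕ Fin n)))), ∑ e ∈ S, f e)
      + T = n * T := by
    rw [Finset.sum_image (fun x hx y hy h => inj2 (Finset.mem_coe.2 hx) (Finset.mem_coe.2 hy) h)]
    have step : ∀ q ∈ (univ ×ˢ P n : Finset (Fin n × Fin n × Fin n)),
        ∑ e ∈ ({E q.1 q.2.1, E q.1 q.2.2} : Finset (Sym2 (Fin n ⊕ Fin n))), f e
          = f (E q.1 q.2.1) + f (E q.1 q.2.2) := by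
      intro q hq
      exact Finset.sum_pair (E_ne_left (ne_of_lt (P_lt' (Finset.mem_product.1 hq).2)))
    rw [Finset.sum_congr rfl step, Finset.sum_product]
    have hTsplit : T = ∑ a : Fin n, ∑ b : Fin n, f (E a b) := by
      rw [hT, Fintype.sum_prod_type]
    rw [hTsplit, ← Finset.sum_add_distrib]
    rw [Finset.sum_congr rfl (fun a _ => pair_sum (fun b => f (E a b))), ← Finset.mul_sum]
  have s3 : (∑ S ∈ ((univ ×ˢ P n).image
        fun q => ({E q.2.1 q.1, E q.2.2 q.1} : Finset (Sym2 (Fin n ⊕ Fin n)))), ∑ e ∈ S, f e)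
      + T = n * T := by
    rw [Finset.sum_image (fun x hx y hy h => inj3 (Finset.mem_coe.2 hx) (Finset.mem_coe.2 hy) h)]
    have step : ∀ q ∈ (univ ×ˢ P n : Finset (Fin n × Fin n × Fin n)),
        ∑ e ∈ ({E q.2.1 q.1, E q.2.2 q.1} : Finset (Sym2 (Fin n ⊕ Fin n))), f e
          = f (E q.2.1 q.1) + f (E q.2.2 q.1) := by
      intro q hq
      exact Finset.sum_pair (E_ne_right (ne_of_lt (P_lt' (Finset.mem_product.1 hq).2)))
    rw [Finset.sum_congr rfl step, Finset.sum_product]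
    have hTsplit : T = ∑ b : Fin n, ∑ a : Fin n, f (E a b) := by
      rw [hT, Fintype.sum_prod_type]
      exact Finset.sum_comm
    rw [hTsplit, ← Finset.sum_add_distrib]
    rw [Finset.sum_congr rfl (fun b _ => pair_sum (fun a => f (E a b))), ← Finset.mul_sum]
  rw [GS, Finset.sum_union hd, Finset.sum_union disj12, s1]
  linarith [s2, s3]



lemma E_swap (a b : Fin n) : s(Sum.inr b, Sum.inl a) = E a b := Sym2.eq_swap

lemma GPS_eq : (GG n).geodesicPathSets = ↑(GS n) := by
  ext S
  simp only [SimpleGraph.geodesicPathSets, Set.mem_setOf_eq, Finset.mem_coe]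
  constructor
  · rintro ⟨u, v, p, ⟨hpath, hlen, hpos⟩, rfl⟩
    rw [mem_GS]
    cases p with
    | nil => simp at hpos
    | cons h q =>
      cases q with
      | nil =>
        rcases u with a | b <;> rcases v with a' | b' <;> simp only [completeBipartiteGraph_adj] at h <;>
          simp only [Sum.isLeft_inl, Sum.isRight_inl, Sum.isLeft_inr, Sum.isRight_inr,
            and_true, and_false, true_and, false_and, or_false, false_or] at h
        · exact absurd h (by simp)
        · left
          refine ⟨a, b', ?_⟩
          simp [E, Walk.edges_cons, Walk.edges_nil]
        · left
          refine ⟨a', b, ?_⟩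
          simp [Walk.edges_cons, Walk.edges_nil, E_swap]
        · exact absurd h (by simp)
      | cons h' q' =>
        rename_i w _
        cases q' with
        | nil =>
          have huv : u ≠ v := by
            rw [Walk.isPath_def] at hpath
            simp only [Walk.support_cons, Walk.support_nil, List.nodup_cons, List.mem_cons,
              List.mem_singleton, List.not_mem_nil, or_false, List.nodup_nil, and_true] at hpath
            tauto
          rcases w with c | c
          · -- middle is inl c ⇒ u, v are inr
            rcases u with a | b
            · exact absurd h (by simp)
            rcases v with a' | b'
            · exact absurd h' (by simp)
            right; left
            refine ⟨c, b, b', by simpa using huv, ?_⟩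
            simp [Walk.edges_cons, Walk.edges_nil, E_swap, E]
          · -- middle is inr c ⇒ u, v are inl
            rcases u with a | b
            swap
            · exact absurd h (by simp)
            rcases v with a' | b'
            swap
            · exact absurd h' (by simp)
            right; right
            refine ⟨c, a, a', by simpa using huv, ?_⟩
            simp [Walk.edges_cons, Walk.edges_nil, E_swap, E]
        | cons h'' q'' =>
          exfalso
          have hd := dist_le_two u v
          simp only [Walk.length_cons] at hlen
          omega
  · rw [mem_GS]
    rintro (⟨a, b, rfl⟩ | ⟨a, b, b', hbb, rfl⟩ | ⟨b, a, a', haa, rfl⟩)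
    · refine ⟨Sum.inl a, Sum.inr b, Walk.cons (adj_lr a b) Walk.nil, ⟨?_, ?_, ?_⟩, ?_⟩
      · rw [Walk.isPath_def]; simp
      · simp [dist_lr]
      · simp
      · simp [E, Walk.edges_cons, Walk.edges_nil]
    · refine ⟨Sum.inr b, Sum.inr b', Walk.cons (adj_rl a b) (Walk.cons (adj_lr a b') Walk.nil),
        ⟨?_, ?_, ?_⟩, ?_⟩
      · rw [Walk.isPath_def]; simp [hbb]
      · simp [dist_rr a hbb]
      · simp
      · simp [Walk.edges_cons, Walk.edges_nil, E_swap, E]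
    · refine ⟨Sum.inl a, Sum.inl a', Walk.cons (adj_lr a b) (Walk.cons (adj_rl a' b) Walk.nil),
        ⟨?_, ?_, ?_⟩, ?_⟩
      · rw [Walk.isPath_def]; simp [haa]
      · simp [dist_ll b haa]
      · simp
      · simp [Walk.edges_cons, Walk.edges_nil, E_swap, E]

lemma tgp_eq : (GG n).tgp = n ^ 3 := by
  rw [SimpleGraph.tgp, GPS_eq, Set.ncard_coe_finset, card_GS]

lemma gauss (m : ℕ) : 2 * (∑ k ∈ Finset.Icc 1 m, k) = m * (m + 1) := by
  have h1 : ∑ k ∈ Finset.Icc 1 m, k = ∑ k ∈ Finset.range (m + 1), k := by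
    have hr : Finset.range (m + 1) = insert 0 (Finset.Icc 1 m) := by
      ext x
      simp only [Finset.mem_range, Finset.mem_insert, Finset.mem_Icc]
      omega
    rw [hr, Finset.sum_insert (by simp)]
    exact (zero_add _).symm
  rw [h1, mul_comm]
  rw [Finset.sum_range_id_mul_two (m + 1)]
  simp [mul_comm]

lemma final_arith (k : ℕ) (h1 : k + 1 ≠ 1) (h2 : k + 1 ≠ 2) (h5 : k + 1 ≠ 5)
    (h9 : (2 * k + 1) ∣ 9) : False := by
  have hle : 2 * k + 1 ≤ 9 := Nat.le_of_dvd (by norm_num) h9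
  have hk : k ≤ 4 := by omega
  interval_cases k <;> omega

end GeodAux

/-- For every positive integer `n` with `n ∉ {1, 2, 5}`, the complete bipartite graph
with both parts of size `n` admits no geodesic Leech labeling. -/
theorem statement_15 (n : ℕ) (hn : 0 < n) (h1 : n ≠ 1) (h2 : n ≠ 2) (h5 : n ≠ 5) :
    ¬ ∃ f : Sym2 (Fin n ⊕ Fin n) → ℕ,
      (completeBipartiteGraph (Fin n) (Fin n)).IsGeodesicLeechLabeling f := by
  rintro ⟨f, -, hbij⟩
  rw [GeodAux.GPS_eq, GeodAux.tgp_eq] at hbij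
  obtain ⟨k, rfl⟩ : ∃ k, n = k + 1 := ⟨n - 1, by omega⟩
  have hsum : ∑ S ∈ GeodAux.GS (k + 1), (∑ e ∈ S, f e)
      = ∑ j ∈ Finset.Icc 1 ((k + 1) ^ 3), j := by
    apply Finset.sum_nbij (i := fun S => ∑ e ∈ S, f e)
    · intro S hS
      have := hbij.mapsTo (Finset.mem_coe.2 hS)
      rw [Set.mem_Icc] at this
      rw [Finset.mem_Icc]
      exact this
    · exact hbij.injOn
    · rw [Finset.coe_Icc]
      exact hbij.surjOn
    · intro S _
      rfl
  have e2 := GeodAux.sum_GS f (n := k + 1)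
  obtain ⟨T, hT⟩ : ∃ T, ∑ q : Fin (k + 1) × Fin (k + 1), f (GeodAux.E q.1 q.2) = T := ⟨_, rfl⟩
  rw [hT] at e2
  have e3 : ∑ S ∈ GeodAux.GS (k + 1), (∑ e ∈ S, f e) = 2 * k * T + T := by
    have h' : (2 * (k + 1)) * T = (2 * k * T + T) + T := by ring
    rw [h'] at e2
    omega
  have hg := GeodAux.gauss ((k + 1) ^ 3)
  have hdvd : (2 * k + 1) ∣ (k + 1) ^ 3 * ((k + 1) ^ 3 + 1) := by
    refine ⟨2 * T, ?_⟩
    rw [← hg, ← hsum, e3]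
    ring
  have hdvd64 : (2 * k + 1) ∣ 64 * ((k + 1) ^ 3 * ((k + 1) ^ 3 + 1)) := hdvd.mul_left 64
  have hid : 64 * ((k + 1) ^ 3 * ((k + 1) ^ 3 + 1)) = (2 * k + 1) *
      ((2 * k + 1) * (4 * k ^ 2 + 10 * k + 7) ^ 2 + 10 * (4 * k ^ 2 + 10 * k + 7)) + 9 := by
    ring
  rw [hid] at hdvd64
  exact GeodAux.final_arith k h1 h2 h5 ((Nat.dvd_add_right (dvd_mul_right _ _)).mp hdvd64)
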